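/- The shuffle homomorphism τ satisfies the equivariance property τ((a⁻¹,h⁻¹)·(g₁,...,g_p,g‖k₁,...,k_q,k)) = (ha)⁻¹ · τ(g₁,...,g_p,g‖k₁,...,k_q,k) with respect to the (K ⋊ K)-module structure on the source and the K-module structure on the target via the multiplication homomorphism μ(k,g) = kg, and it is compatible with augmentations: (ε ⊗ ε)(k,g) = ε(kg). -/

import Mathlib

open Finsupp

namespace Stmt8

/-- Merge the entries at positions `i` and `i+1` of a tuple. -/
def mergeD {α : Type} [Mul α] {n : ℕ} (i : ℕ) (h : Fin (n + 1) → α) : Fin n → α :=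
  fun j =>
    if (j : ℕ) < i then h j.castSucc
    else if (j : ℕ) = i then h j.castSucc * h j.succ
    else h j.succ

variable (K : Type) [Group K]

/-- `n`-chains of the bar resolution of `K`. -/
abbrev Ch (n : ℕ) : Type := (Fin (n + 1) → K) →₀ ℤ

/-- The bar differential on a generator. -/
noncomputable def barDgen {n : ℕ} (h : Fin (n + 2) → K) : Ch K n :=
  Finsupp.single (fun j => h j.succ) 1 +
    ∑ i ∈ Finset.range (n + 1), ((-1 : ℤ) ^ (i + 1)) • Finsupp.single (mergeD i h) 1

/-- The bar differential `∂_K`. -/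
noncomputable def barD (n : ℕ) : Ch K (n + 1) →+ Ch K n :=
  Finsupp.liftAddHom fun h => (zmultiplesHom (Ch K n)) (barDgen K h)

/-- Degree `n` part of `Tot(C_*(EK,ℤ) ⊗_ℤ C_*(EK,ℤ))` (for the conjugation action). -/
abbrev TotCh (n : ℕ) : Type :=
  ((Σ p : Fin (n + 1), (Fin ((p : ℕ) + 1) → K) × (Fin ((n - (p : ℕ)) + 1) → K)) →₀ ℤ)

/-- The total differential `∂ ⊗ 1 ⊕ (-1)^p 1 ⊗ ∂` on a generator. -/
noncomputable def totDgen {n : ℕ}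
    (x : Σ p : Fin (n + 2), (Fin ((p : ℕ) + 1) → K) × (Fin ((n + 1 - (p : ℕ)) + 1) → K)) :
    TotCh K n :=
  (if hp : 1 ≤ (x.1 : ℕ) then
    Finsupp.mapDomain
      (fun gs' : Fin (((x.1 : ℕ) - 1) + 1) → K =>
        (⟨⟨(x.1 : ℕ) - 1, by have := x.1.isLt; omega⟩,
          (gs', fun j => x.2.2 (Fin.cast (by
            show (n - ((x.1 : ℕ) - 1)) + 1 = (n + 1 - (x.1 : ℕ)) + 1
            omega) j))⟩ :
            Σ p : Fin (n + 1), (Fin ((p : ℕ) + 1) → K) × (Fin ((n - (p : ℕ)) + 1) → K)))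
      (barDgen K (fun j => x.2.1 (Fin.cast (by omega) j)))
  else 0) +
  (if hq : (x.1 : ℕ) ≤ n then
    ((-1 : ℤ) ^ (x.1 : ℕ)) • Finsupp.mapDomain
      (fun ks' : Fin ((n - (x.1 : ℕ)) + 1) → K =>
        (⟨⟨(x.1 : ℕ), by omega⟩, (x.2.1, ks')⟩ :
            Σ p : Fin (n + 1), (Fin ((p : ℕ) + 1) → K) × (Fin ((n - (p : ℕ)) + 1) → K)))
      (barDgen K (fun j => x.2.2 (Fin.cast (by omega) j)))
  else 0)

/-- The total differential. -/
noncomputable def totD (n : ℕ) : TotCh K (n + 1) →+ TotCh K n :=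
  Finsupp.liftAddHom fun x => (zmultiplesHom (TotCh K n)) (totDgen K x)

/-- A `(p,q)`-shuffle: a permutation of `Fin (p+q)` monotone on the first `p` and the
last `q` letters. -/
def IsShuffle (p q : ℕ) (σ : Equiv.Perm (Fin (p + q))) : Prop :=
  ∀ i j : Fin (p + q), i < j → (((j : ℕ) < p) ∨ (p ≤ (i : ℕ))) → σ i < σ j

/-- Product `g_d ⋯ g_{p-1}` of a tail of a tuple. -/
def prefixProd {p : ℕ} (gs : Fin p → K) (d : ℕ) : K := ((List.ofFn gs).drop d).prod

/-- The tuple `λ[g₁|…|g_p|k₁|…|k_q]` associated to a `(p,q)`-shuffle `λ`: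
`s_{λ(i)} = gᵢ` for `i ≤ p` and
`s_{λ(i)} = (g_{p+λ(i)-i+1}⋯g_p)·k_{i-p}·(g_{p+λ(i)-i+1}⋯g_p)⁻¹` for `i > p`. -/
def shuffleTuple (p q : ℕ) (σ : Equiv.Perm (Fin (p + q))) (gs : Fin p → K)
    (ks : Fin q → K) : Fin (p + q) → K :=
  fun j =>
    if h : ((σ.symm j : Fin (p + q)) : ℕ) < p then gs ⟨(σ.symm j : Fin (p + q)), h⟩
    else
      prefixProd K gs (p + (j : ℕ) - ((σ.symm j : Fin (p + q)) : ℕ)) *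
        ks ⟨((σ.symm j : Fin (p + q)) : ℕ) - p, by
          have := (σ.symm j).isLt; omega⟩ *
        (prefixProd K gs (p + (j : ℕ) - ((σ.symm j : Fin (p + q)) : ℕ)))⁻¹

open scoped Classical in
/-- `τ[g₁|…|g_p‖k₁|…|k_q] = Σ_{λ ∈ Shuff(p,q)} (-1)^|λ| λ[g₁|…|g_p|k₁|…|k_q]`. -/
noncomputable def tauBar (p q : ℕ) (gs : Fin p → K) (ks : Fin q → K) :
    ((Fin (p + q) → K) →₀ ℤ) :=
  ∑ σ ∈ Finset.univ.filter (fun σ => IsShuffle p q σ),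
    (((Equiv.Perm.sign σ : ℤˣ) : ℤ)) • Finsupp.single (shuffleTuple K p q σ gs ks) 1

/-- The shuffle homomorphism on a generator:
`τ(g₁,…,g_p,g‖k₁,…,k_q,k) = Σ_λ (gk)⁻¹·(-1)^|λ| λ[g₁|…|g_p|gk₁g⁻¹|…|gk_qg⁻¹]`. -/
noncomputable def tauGen {p q : ℕ} (x : (Fin (p + 1) → K) × (Fin (q + 1) → K)) :
    Ch K (p + q) :=
  Finsupp.mapDomain
    (fun t => Fin.snoc t (x.1 (Fin.last p) * x.2 (Fin.last q)))
    (tauBar K p q (Fin.init x.1)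
      (fun i => x.1 (Fin.last p) * x.2 i.castSucc * (x.1 (Fin.last p))⁻¹))

/-- Reindexing of chains along an equality of degrees. -/
noncomputable def chCast {m m' : ℕ} (h : m = m') (x : Ch K m) : Ch K m' :=
  Finsupp.mapDomain (fun t (j : Fin (m' + 1)) => t (Fin.cast (by rw [h]) j)) x

/-- The shuffle homomorphism `τ : Tot_n(C_*(EK,ℤ) ⊗ C_*(EK,ℤ)) → C_n(EK,ℤ)`. -/
noncomputable def tauCh (n : ℕ) : TotCh K n →+ Ch K n :=
  Finsupp.liftAddHom fun s =>
    (zmultiplesHom (Ch K n)) (chCast K (by have := s.1.isLt; omega) (tauGen K s.2))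

/-- The augmentation `ε : C₀(EK,ℤ) → ℤ`. -/
noncomputable def aug : Ch K 0 →+ ℤ :=
  Finsupp.liftAddHom fun _ => AddMonoidHom.id ℤ

/-- The augmentation `ε ⊗ ε` on the total complex. -/
noncomputable def augTot : TotCh K 0 →+ ℤ :=
  Finsupp.liftAddHom fun _ => AddMonoidHom.id ℤ

/-- The `K`-action on the basis of `C_n(EK,ℤ)`: `h·(h₁,…,h_{n+1}) = (h₁,…,h_{n+1}h⁻¹)`. -/
def chActFun (n : ℕ) (g : K) : (Fin (n + 1) → K) → (Fin (n + 1) → K) :=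
  fun f j => if (j : ℕ) = n then f j * g⁻¹ else f j

/-- The `K ⋊ K`-action on the basis of the total complex (conjugation action):
`(k,g)·(g₁,…,g_{p+1}‖k₁,…,k_{q+1}) = (g₁,…,g_{p+1}g⁻¹‖gk₁g⁻¹,…,gk_{q+1}g⁻¹k⁻¹)`. -/
def totActFun {n : ℕ} (a : K × K) :
    (Σ p : Fin (n + 1), (Fin ((p : ℕ) + 1) → K) × (Fin ((n - (p : ℕ)) + 1) → K)) →
      (Σ p : Fin (n + 1), (Fin ((p : ℕ) + 1) → K) × (Fin ((n - (p : ℕ)) + 1) → K)) :=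
  fun s =>
    ⟨s.1,
      (fun j => if (j : ℕ) = (s.1 : ℕ) then s.2.1 j * a.2⁻¹ else s.2.1 j,
       fun j =>
        if (j : ℕ) = n - (s.1 : ℕ) then a.2 * s.2.2 j * a.2⁻¹ * a.1⁻¹
        else a.2 * s.2.2 j * a.2⁻¹)⟩


lemma snoc_chAct (p q : ℕ) (c w : K) (t : Fin (p + q) → K) :
    chActFun K (p + q) w⁻¹ (Fin.snoc t c) = Fin.snoc t (c * w) := by
  funext j
  refine Fin.lastCases ?_ ?_ j
  · simp [chActFun]
  · intro i
    have hne : (i : ℕ) ≠ p + q := by have := i.isLt; omega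
    simp [chActFun, hne]

lemma tauGen_act (p q : ℕ) (a h : K) (x : (Fin (p + 1) → K) × (Fin (q + 1) → K)) :
    tauGen K (⟨fun j => if (j : ℕ) = p then x.1 j * h else x.1 j,
      fun j => if (j : ℕ) = q then h⁻¹ * x.2 j * h * a else h⁻¹ * x.2 j * h⟩ :
      (Fin (p + 1) → K) × (Fin (q + 1) → K)) =
    Finsupp.mapDomain (chActFun K (p + q) ((h * a)⁻¹)) (tauGen K x) := by
  unfold tauGen
  simp only
  have h1 : (Fin.init fun j : Fin (p + 1) => if (j : ℕ) = p then x.1 j * h else x.1 j)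
      = Fin.init x.1 := by
    funext j
    have : (j : ℕ) ≠ p := by have := j.isLt; omega
    simp [Fin.init, this]
  have hl1 : (if ((Fin.last p : Fin (p + 1)) : ℕ) = p then x.1 (Fin.last p) * h
      else x.1 (Fin.last p)) = x.1 (Fin.last p) * h := by simp
  have hl2 : (if ((Fin.last q : Fin (q + 1)) : ℕ) = q then
        h⁻¹ * x.2 (Fin.last q) * h * a else h⁻¹ * x.2 (Fin.last q) * h)
      = h⁻¹ * x.2 (Fin.last q) * h * a := by simp
  rw [h1, hl1, hl2]
  have h2 : (fun i : Fin q => x.1 (Fin.last p) * h *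
        (if ((i.castSucc : Fin (q + 1)) : ℕ) = q then h⁻¹ * x.2 i.castSucc * h * a
          else h⁻¹ * x.2 i.castSucc * h) * (x.1 (Fin.last p) * h)⁻¹)
      = fun i : Fin q => x.1 (Fin.last p) * x.2 i.castSucc * (x.1 (Fin.last p))⁻¹ := by
    funext i
    have : ((i.castSucc : Fin (q + 1)) : ℕ) ≠ q := by have := i.isLt; simp; omega
    rw [if_neg this]
    group
  rw [h2]
  have h3 : x.1 (Fin.last p) * h * (h⁻¹ * x.2 (Fin.last q) * h * a)
      = x.1 (Fin.last p) * x.2 (Fin.last q) * (h * a) := by group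
  rw [h3, ← Finsupp.mapDomain_comp]
  congr 1
  funext t
  exact (snoc_chAct K p q (x.1 (Fin.last p) * x.2 (Fin.last q)) (h * a) t).symm

set_option linter.unusedSectionVars false in
lemma chCast_rfl (m : ℕ) (e : m = m) (y : Ch K m) : chCast K e y = y := by
  show Finsupp.mapDomain id y = y
  exact Finsupp.mapDomain_id

lemma chCast_mapDomain (m n : ℕ) (e : m = n) (g : K) (y : Ch K m) :
    chCast K e (Finsupp.mapDomain (chActFun K m g) y) =
      Finsupp.mapDomain (chActFun K n g) (chCast K e y) := by
  subst e
  rw [chCast_rfl, chCast_rfl]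

/-- The shuffle homomorphism `τ` satisfies the equivariance property
`τ((a⁻¹,h⁻¹)·x) = (ha)⁻¹·τ(x)` with respect to the `K ⋊ K`-module structure on the source
and the `K`-module structure on the target via `μ(k,g) = kg`, and it is compatible with
the augmentations: `(ε ⊗ ε)(x) = ε(τ(x))`. -/
theorem stmt_8 :
    (∀ (n : ℕ) (a h : K) (x : TotCh K n),
      tauCh K n (Finsupp.mapDomain (totActFun K (a⁻¹, h⁻¹)) x) =
        Finsupp.mapDomain (chActFun K n ((h * a)⁻¹)) (tauCh K n x)) ∧
    (∀ x : TotCh K 0, augTot K x = aug K (tauCh K 0 x)) := by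
  constructor
  · intro n a h x
    induction x using Finsupp.induction_linear with
    | zero => simp
    | add f g hf hg => rw [Finsupp.mapDomain_add, map_add, map_add, hf, hg, Finsupp.mapDomain_add]
    | single s b =>
      rw [Finsupp.mapDomain_single]
      rw [show tauCh K n (Finsupp.single (totActFun K (a⁻¹, h⁻¹) s) b)
          = b • chCast K (by have := s.1.isLt; omega)
              (tauGen K (totActFun K (a⁻¹, h⁻¹) s).2) from
        Finsupp.liftAddHom_apply_single _ _ _]
      rw [show tauCh K n (Finsupp.single s b)
          = b • chCast K (by have := s.1.isLt; omega) (tauGen K s.2) from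
        Finsupp.liftAddHom_apply_single _ _ _]
      rw [Finsupp.mapDomain_smul]
      congr 1
      have hact : (totActFun K (a⁻¹, h⁻¹) s).2
          = (⟨fun j => if (j : ℕ) = (s.1 : ℕ) then s.2.1 j * h else s.2.1 j,
              fun j => if (j : ℕ) = n - (s.1 : ℕ) then h⁻¹ * s.2.2 j * h * a
                else h⁻¹ * s.2.2 j * h⟩ :
              (Fin ((s.1 : ℕ) + 1) → K) × (Fin ((n - (s.1 : ℕ)) + 1) → K)) := by
        simp [totActFun]
      rw [hact]
      exact (congrArg (chCast K _) (tauGen_act K (s.1 : ℕ) (n - (s.1 : ℕ)) a h s.2)).trans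
        (chCast_mapDomain K _ n (by have := s.1.isLt; omega) _ _)
  · intro x
    induction x using Finsupp.induction_linear with
    | zero => simp
    | add f g hf hg => rw [map_add, map_add, map_add, hf, hg]
    | single s b =>
      obtain ⟨p, gs, ks⟩ := s
      obtain rfl : p = 0 := Fin.ext (by have := p.isLt; omega)
      rw [show augTot K (Finsupp.single (⟨0, (gs, ks)⟩ :
            Σ p : Fin (0 + 1), (Fin ((p : ℕ) + 1) → K) × (Fin ((0 - (p : ℕ)) + 1) → K)) b) = b from
        Finsupp.liftAddHom_apply_single _ _ _]
      rw [show tauCh K 0 (Finsupp.single (⟨0, (gs, ks)⟩ :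
            Σ p : Fin (0 + 1), (Fin ((p : ℕ) + 1) → K) × (Fin ((0 - (p : ℕ)) + 1) → K)) b)
          = b • chCast K rfl (tauGen K (gs, ks)) from
        Finsupp.liftAddHom_apply_single _ _ _]
      rw [map_zsmul]
      have htau : tauBar K 0 0 (Fin.init gs)
            (fun i => gs (Fin.last 0) * ks i.castSucc * (gs (Fin.last 0))⁻¹)
          = Finsupp.single (shuffleTuple K 0 0 1 (Fin.init gs)
              (fun i => gs (Fin.last 0) * ks i.castSucc * (gs (Fin.last 0))⁻¹)) 1 := by
        unfold tauBar
        classical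
        have hsub : ∀ σ : Equiv.Perm (Fin (0 + 0)), σ = 1 := fun σ => Equiv.ext fun j => j.elim0
        have hfil : ∀ σ : Equiv.Perm (Fin (0 + 0)), IsShuffle 0 0 σ := fun σ i => i.elim0
        rw [Finset.filter_true_of_mem fun σ _ => hfil σ]
        rw [show (Finset.univ : Finset (Equiv.Perm (Fin (0 + 0)))) = {1} from by
          ext σ; simp [hsub σ]]
        simp
      rw [show tauGen K (gs, ks) = Finsupp.mapDomain
            (fun t => Fin.snoc t (gs (Fin.last 0) * ks (Fin.last 0)))
            (tauBar K 0 0 (Fin.init gs)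
              (fun i => gs (Fin.last 0) * ks i.castSucc * (gs (Fin.last 0))⁻¹)) from rfl]
      rw [htau, Finsupp.mapDomain_single]
      rw [chCast_rfl]
      rw [show aug K (Finsupp.single (Fin.snoc (shuffleTuple K 0 0 1 (Fin.init gs)
            (fun i => gs (Fin.last 0) * ks i.castSucc * (gs (Fin.last 0))⁻¹))
            (gs (Fin.last 0) * ks (Fin.last 0))) 1) = 1 from
        Finsupp.liftAddHom_apply_single _ _ _]
      simp

end Stmt8
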